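/- PSL(2,ℤ) acts simply transitively on the set of oriented edges of the Farey tesselation; equivalently, the map PSL(2,ℤ) → {(x,y) : x,y ∈ ℚ ∪ {∞}, x,y span a Farey edge} sending A = [[a,b],[c,d]] to the ordered pair (-b/a, -d/c) is a bijection. -/

import Mathlib

instance : Fact (Even (Fintype.card (Fin 2))) := ⟨by decide⟩

/-- Normalize an integer fraction `p/q` (with `(p,q) ≠ (0,0)`) to lowest-terms-sign form:
denominator positive, or denominator zero and numerator positive (the point `∞ = 1/0`). -/
def fracNorm (p q : ℤ) : ℤ × ℤ :=
  if 0 < q ∨ (q = 0 ∧ 0 < p) then (p, q) else (-p, -q)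

/-- The pair of extended rationals `(-b/a, -d/c)` (in normalized form) associated to
`A = [[a,b],[c,d]] ∈ SL(2,ℤ)`, the endpoints of the oriented Farey edge `e_A`. -/
def fareyPair (A : Matrix.SpecialLinearGroup (Fin 2) ℤ) : (ℤ × ℤ) × (ℤ × ℤ) :=
  (fracNorm (-A.1 0 1) (A.1 0 0), fracNorm (-A.1 1 1) (A.1 1 0))

/-- An ordered pair of normalized extended rationals spanning an oriented Farey edge. -/
def IsOrientedFareyEdge (x : (ℤ × ℤ) × (ℤ × ℤ)) : Prop :=
  Int.gcd x.1.1 x.1.2 = 1 ∧ Int.gcd x.2.1 x.2.2 = 1 ∧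
    (0 < x.1.2 ∨ (x.1.2 = 0 ∧ 0 < x.1.1)) ∧ (0 < x.2.2 ∨ (x.2.2 = 0 ∧ 0 < x.2.1)) ∧
    |x.1.1 * x.2.2 - x.1.2 * x.2.1| = 1


lemma fracNorm_spec (p q : ℤ) : fracNorm p q = (p, q) ∨ fracNorm p q = (-p, -q) := by
  unfold fracNorm; split <;> simp

lemma fracNorm_neg_neg (p q : ℤ) : fracNorm (-p) (-q) = fracNorm p q := by
  unfold fracNorm
  split <;> split <;> rename_i h1 h2 <;> simp_all [Prod.ext_iff] <;> omega

lemma fracNorm_of_cond (p q : ℤ) (h : 0 < q ∨ (q = 0 ∧ 0 < p)) : fracNorm p q = (p, q) :=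
  if_pos h

lemma fracNorm_pos (p q : ℤ) (h : ¬(p = 0 ∧ q = 0)) :
    0 < (fracNorm p q).2 ∨ ((fracNorm p q).2 = 0 ∧ 0 < (fracNorm p q).1) := by
  unfold fracNorm; split <;> rename_i h1 <;> simp <;> omega

lemma detA (A : Matrix.SpecialLinearGroup (Fin 2) ℤ) :
    A.1 0 0 * A.1 1 1 - A.1 0 1 * A.1 1 0 = 1 := by
  have := A.2; rwa [Matrix.det_fin_two] at this

/-- `PSL(2,ℤ)` acts simply transitively on oriented Farey edges: the map
`A ↦ (-b/a, -d/c)` lands in the oriented Farey edges, two matrices have the same image iff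
they agree up to sign (so the map descends to an injection of `PSL(2,ℤ)`), and every
oriented Farey edge arises; i.e. the induced map on `PSL(2,ℤ)` is a bijection. -/
theorem stmt19 :
    (∀ A : Matrix.SpecialLinearGroup (Fin 2) ℤ, IsOrientedFareyEdge (fareyPair A)) ∧
    (∀ A B : Matrix.SpecialLinearGroup (Fin 2) ℤ,
      fareyPair A = fareyPair B ↔ (A = B ∨ A = -B)) ∧
    (∀ x : (ℤ × ℤ) × (ℤ × ℤ), IsOrientedFareyEdge x →
      ∃ A : Matrix.SpecialLinearGroup (Fin 2) ℤ, fareyPair A = x) := by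
  refine ⟨?_, ?_, ?_⟩
  · intro A
    set a := A.1 0 0; set b := A.1 0 1; set c := A.1 1 0; set d := A.1 1 1
    have hdet : a * d - b * c = 1 := detA A
    have hg1 : Int.gcd (-b) a = 1 := by
      rw [← Int.isCoprime_iff_gcd_eq_one]; exact ⟨c, d, by linear_combination hdet⟩
    have hg2 : Int.gcd (-d) c = 1 := by
      rw [← Int.isCoprime_iff_gcd_eq_one]; exact ⟨-a, -b, by linear_combination hdet⟩
    have hne1 : ¬((-b) = 0 ∧ a = 0) := by
      rintro ⟨h1, h2⟩; rw [neg_eq_zero] at h1; rw [h1, h2] at hdet; simp at hdet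
    have hne2 : ¬((-d) = 0 ∧ c = 0) := by
      rintro ⟨h1, h2⟩; rw [neg_eq_zero] at h1; rw [h1, h2] at hdet; simp at hdet
    have habs : |(-b) * c - a * (-d)| = 1 := by
      rw [show (-b) * c - a * (-d) = a * d - b * c by ring, hdet]; rfl
    refine ⟨?_, ?_, fracNorm_pos _ _ hne1, fracNorm_pos _ _ hne2, ?_⟩
    · show Int.gcd (fracNorm (-b) a).1 (fracNorm (-b) a).2 = 1
      rcases fracNorm_spec (-b) a with h | h <;> rw [h] <;>
        simpa [Int.gcd, Int.natAbs_neg] using hg1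
    · show Int.gcd (fracNorm (-d) c).1 (fracNorm (-d) c).2 = 1
      rcases fracNorm_spec (-d) c with h | h <;> rw [h] <;>
        simpa [Int.gcd, Int.natAbs_neg] using hg2
    · show |(fracNorm (-b) a).1 * (fracNorm (-d) c).2 -
            (fracNorm (-b) a).2 * (fracNorm (-d) c).1| = 1
      rcases fracNorm_spec (-b) a with h1 | h1 <;> rcases fracNorm_spec (-d) c with h2 | h2 <;>
        rw [h1, h2] <;> simp only [] <;>
        [skip; rw [show (-b) * (-c) - a * (-(-d)) = -((-b) * c - a * (-d)) by ring, abs_neg];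
         rw [show (-(-b)) * c - (-a) * (-d) = -((-b) * c - a * (-d)) by ring, abs_neg];
         rw [show (-(-b)) * (-c) - (-a) * (-(-d)) = (-b) * c - a * (-d) by ring]] <;>
        exact habs
  · intro A B
    constructor
    · intro h
      set a := A.1 0 0; set b := A.1 0 1; set c := A.1 1 0; set d := A.1 1 1
      set a' := B.1 0 0; set b' := B.1 0 1; set c' := B.1 1 0; set d' := B.1 1 1
      have hdA : a * d - b * c = 1 := detA A
      have hdB : a' * d' - b' * c' = 1 := detA B
      have h1 : fracNorm (-b) a = fracNorm (-b') a' := congrArg Prod.fst h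
      have h2 : fracNorm (-d) c = fracNorm (-d') c' := congrArg Prod.snd h
      have e1 : (b = b' ∧ a = a') ∨ (b = -b' ∧ a = -a') := by
        rcases fracNorm_spec (-b) a with g1 | g1 <;> rcases fracNorm_spec (-b') a' with g2 | g2 <;>
          rw [g1, g2] at h1 <;> simp [Prod.ext_iff] at h1 <;> omega
      have e2 : (d = d' ∧ c = c') ∨ (d = -d' ∧ c = -c') := by
        rcases fracNorm_spec (-d) c with g1 | g1 <;> rcases fracNorm_spec (-d') c' with g2 | g2 <;>
          rw [g1, g2] at h2 <;> simp [Prod.ext_iff] at h2 <;> omega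
      rcases e1 with ⟨hb, ha⟩ | ⟨hb, ha⟩ <;> rcases e2 with ⟨hd, hc⟩ | ⟨hd, hc⟩
      · left
        apply Subtype.ext; ext i j
        fin_cases i <;> fin_cases j <;> assumption
      · exfalso; rw [ha, hb, hc, hd] at hdA; nlinarith [hdA, hdB]
      · exfalso; rw [ha, hb, hc, hd] at hdA; nlinarith [hdA, hdB]
      · right
        apply Subtype.ext
        rw [Matrix.SpecialLinearGroup.coe_neg]
        ext i j
        fin_cases i <;> fin_cases j <;> simp [Matrix.neg_apply] <;> assumption
    · rintro (rfl | rfl)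
      · rfl
      · unfold fareyPair
        rw [Matrix.SpecialLinearGroup.coe_neg]
        simp only [Matrix.neg_apply, neg_neg]
        rw [show (B.1 0 1 : ℤ) = -(-B.1 0 1) by ring, show (B.1 1 1 : ℤ) = -(-B.1 1 1) by ring]
        rw [fracNorm_neg_neg, fracNorm_neg_neg]
        simp
  · rintro ⟨⟨p1, q1⟩, p2, q2⟩ ⟨hg1, hg2, hc1, hc2, habs⟩
    simp only at hg1 hg2 hc1 hc2 habs
    set ε : ℤ := p1 * q2 - q1 * p2 with hε
    have hε1 : ε = 1 ∨ ε = -1 := by rcases abs_eq (by norm_num : (0:ℤ) ≤ 1) |>.mp habs with h | h <;> [left; right] <;> exact h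
    refine ⟨⟨!![q1, -p1; ε * q2, -(ε * p2)], ?_⟩, ?_⟩
    · rw [Matrix.det_fin_two_of]
      rcases hε1 with h | h <;> rw [hε] at h ⊢ <;> nlinarith [h]
    · unfold fareyPair
      have e00 : (!![q1, -p1; ε * q2, -(ε * p2)] : Matrix (Fin 2) (Fin 2) ℤ) 0 0 = q1 := by simp
      have e01 : (!![q1, -p1; ε * q2, -(ε * p2)] : Matrix (Fin 2) (Fin 2) ℤ) 0 1 = -p1 := by simp
      have e10 : (!![q1, -p1; ε * q2, -(ε * p2)] : Matrix (Fin 2) (Fin 2) ℤ) 1 0 = ε * q2 := by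
        simp
      have e11 : (!![q1, -p1; ε * q2, -(ε * p2)] : Matrix (Fin 2) (Fin 2) ℤ) 1 1 = -(ε * p2) := by
        simp
      show (fracNorm _ _, fracNorm _ _) = _
      rw [Matrix.SpecialLinearGroup.coe_mk, e00, e01, e10, e11, neg_neg, neg_neg]
      rw [fracNorm_of_cond p1 q1 hc1]
      rcases hε1 with h | h
      · rw [h]; simp only [one_mul]; rw [fracNorm_of_cond p2 q2 hc2]
      · rw [h]; simp only [neg_one_mul, neg_neg]
        rw [show (-q2 : ℤ) = -q2 by ring]
        rw [fracNorm_neg_neg, fracNorm_of_cond p2 q2 hc2]
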